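/- Let X, Y be finitely valued random variables and let A be uniform on {1,...,K} and independent of (X,Y). With Y_j = Y if A = j and Y_j = e otherwise, for every j one has H(X|Y_j, A) + I(X;A) = H(X|Y) + ((K-1)/K) I(X;Y). -/
import Mathlib


open Finset

section Defs

/-- Probability of the event `X = x` under the mass function `μ`. -/
noncomputable def pr {Ω : Type*} [Fintype Ω] (μ : Ω → ℝ) {α : Type*} [Fintype α]
    [DecidableEq α] (X : Ω → α) (x : α) : ℝ :=
  ∑ ω, if X ω = x then μ ω else 0

/-- Shannon entropy (base 2) of a finitely valued random variable. -/
noncomputable def ent {Ω : Type*} [Fintype Ω] (μ : Ω → ℝ) {α : Type*} [Fintype α]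
    [DecidableEq α] (X : Ω → α) : ℝ :=
  - ∑ x, pr μ X x * Real.logb 2 (pr μ X x)

/-- Conditional entropy `H(X|Y) = H(X,Y) - H(Y)`. -/
noncomputable def condEnt {Ω : Type*} [Fintype Ω] (μ : Ω → ℝ) {α β : Type*}
    [Fintype α] [DecidableEq α] [Fintype β] [DecidableEq β]
    (X : Ω → α) (Y : Ω → β) : ℝ :=
  ent μ (fun ω => (X ω, Y ω)) - ent μ Y

/-- Mutual information `I(X;Y) = H(X) - H(X|Y)`. -/
noncomputable def mi {Ω : Type*} [Fintype Ω] (μ : Ω → ℝ) {α β : Type*}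
    [Fintype α] [DecidableEq α] [Fintype β] [DecidableEq β]
    (X : Ω → α) (Y : Ω → β) : ℝ :=
  ent μ X - condEnt μ X Y

/-- Conditional mutual information `I(X;Y|Z) = H(X|Z) - H(X|Y,Z)`. -/
noncomputable def cmi {Ω : Type*} [Fintype Ω] (μ : Ω → ℝ) {α β γ : Type*}
    [Fintype α] [DecidableEq α] [Fintype β] [DecidableEq β] [Fintype γ] [DecidableEq γ]
    (X : Ω → α) (Y : Ω → β) (Z : Ω → γ) : ℝ :=
  condEnt μ X Z - condEnt μ X (fun ω => (Y ω, Z ω))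

/-- `μ` is a probability mass function on the finite sample space `Ω`. -/
def IsProb {Ω : Type*} [Fintype Ω] (μ : Ω → ℝ) : Prop :=
  (∀ ω, 0 ≤ μ ω) ∧ ∑ ω, μ ω = 1

/-- `A` and `Y` are conditionally independent given `X` (Markov chain `A - X - Y`). -/
def CondIndep {Ω : Type*} [Fintype Ω] (μ : Ω → ℝ) {α β γ : Type*}
    [Fintype α] [DecidableEq α] [Fintype β] [DecidableEq β] [Fintype γ] [DecidableEq γ]
    (A : Ω → α) (Y : Ω → β) (X : Ω → γ) : Prop :=
  ∀ a y x, pr μ (fun ω => (A ω, Y ω, X ω)) (a, y, x) * pr μ X x =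
    pr μ (fun ω => (A ω, X ω)) (a, x) * pr μ (fun ω => (Y ω, X ω)) (y, x)

/-- Binary entropy function (base 2). -/
noncomputable def H2 (p : ℝ) : ℝ :=
  -(p * Real.logb 2 p) - (1 - p) * Real.logb 2 (1 - p)

end Defs

section Helpers3141

lemma pr_comp {Ω : Type*} [Fintype Ω] (μ : Ω → ℝ) {τ δ : Type*} [Fintype τ] [DecidableEq τ]
    [Fintype δ] [DecidableEq δ] (T : Ω → τ) (F : τ → δ) (W : Ω → δ)
    (hW : ∀ ω, W ω = F (T ω)) (d : δ) :
    pr μ W d = ∑ t, if F t = d then pr μ T t else 0 := by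
  simp only [pr]
  rw [Finset.sum_congr rfl (fun t _ => show (if F t = d then (∑ ω, if T ω = t then μ ω else 0) else 0)
      = ∑ ω, if T ω = t then (if F t = d then μ ω else 0) else 0 by
        by_cases h : F t = d <;> simp [h]),
    Finset.sum_comm]
  simp [Finset.sum_ite_eq, hW]

lemma pr_total {Ω : Type*} [Fintype Ω] (μ : Ω → ℝ) {δ : Type*}
    [Fintype δ] [DecidableEq δ] (W : Ω → δ) :
    ∑ d, pr μ W d = ∑ ω, μ ω := by
  simp only [pr]
  rw [Finset.sum_comm]
  simp [Finset.sum_ite_eq]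

lemma pr_nonneg {Ω : Type*} [Fintype Ω] {μ : Ω → ℝ} (hμ : ∀ ω, 0 ≤ μ ω) {δ : Type*}
    [Fintype δ] [DecidableEq δ] (W : Ω → δ) (d : δ) : 0 ≤ pr μ W d := by
  apply Finset.sum_nonneg; intro ω _; split <;> simp [hμ ω]

lemma sum_ite_pull {ι : Type*} [Fintype ι] (P : Prop) [Decidable P] (f : ι → ℝ) :
  ∑ i, (if P then f i else 0) = if P then ∑ i, f i else 0 := by split_ifs <;> simp

lemma clog (c t : ℝ) (hc : 0 < c) (ht : 0 ≤ t) :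
    (c * t) * Real.logb 2 (c * t) = c * Real.logb 2 c * t + c * (t * Real.logb 2 t) := by
  rcases eq_or_lt_of_le ht with h | h
  · simp [← h]
  · rw [Real.logb_mul hc.ne' h.ne']; ring
lemma sum_clog {ι : Type*} [Fintype ι] (c : ℝ) (hc : 0 < c) (f : ι → ℝ) (hf : ∀ i, 0 ≤ f i) :
    ∑ i, (c * f i) * Real.logb 2 (c * f i)
      = c * Real.logb 2 c * (∑ i, f i) + c * ∑ i, f i * Real.logb 2 (f i) := by
  rw [Finset.mul_sum, Finset.mul_sum, ← Finset.sum_add_distrib]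
  exact Finset.sum_congr rfl fun i _ => clog c (f i) hc (hf i)
lemma sum_clog2 {ι κ : Type*} [Fintype ι] [Fintype κ] (c : ℝ) (hc : 0 < c)
    (f : ι → κ → ℝ) (hf : ∀ i k, 0 ≤ f i k) :
    ∑ i, ∑ k, (c * f i k) * Real.logb 2 (c * f i k)
      = c * Real.logb 2 c * (∑ i, ∑ k, f i k) + c * ∑ i, ∑ k, f i k * Real.logb 2 (f i k) := by
  rw [Finset.sum_congr rfl fun i _ => sum_clog c hc (f i) (hf i), Finset.sum_add_distrib,
    ← Finset.mul_sum, ← Finset.mul_sum]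
lemma sum_fin_ite {K : ℕ} (j : Fin K) (u v : ℝ) :
    ∑ a : Fin K, (if a = j then u else v) = u + ((K:ℝ) - 1) * v := by
  have h : ∀ a : Fin K, (if a = j then u else v) = (if a = j then u - v else 0) + v := by
    intro a; split <;> ring
  simp only [h, Finset.sum_add_distrib, Finset.sum_ite_eq' Finset.univ j (fun _ => u - v)]
  simp [Finset.card_univ, mul_comm]
  ring

end Helpers3141

/-- If `A` is uniform on `{1,…,K}` and independent of `(X,Y)`, then
for every `j`, `H(X|Y_j,A) + I(X;A) = H(X|Y) + ((K-1)/K) I(X;Y)`. -/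
theorem stmt3 {Ω α β : Type*} [Fintype Ω] [Fintype α] [DecidableEq α]
    [Fintype β] [DecidableEq β] {K : ℕ} (hK : 1 ≤ K)
    (μ : Ω → ℝ) (hμ : IsProb μ) (X : Ω → α) (Y : Ω → β) (A : Ω → Fin K)
    (hUnif : ∀ a : Fin K, pr μ A a = 1 / K)
    (hInd : ∀ (a : Fin K) (x : α) (y : β),
      pr μ (fun ω => (A ω, X ω, Y ω)) (a, x, y) =
        pr μ A a * pr μ (fun ω => (X ω, Y ω)) (x, y)) :
    ∀ j : Fin K,
      condEnt μ X
          (fun ω => ((if A ω = j then some (Y ω) else (none : Option β)), A ω))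
        + mi μ X A
      = condEnt μ X Y + ((K - 1 : ℝ) / K) * mi μ X Y := by
  intro j
  have hK0 : (0:ℝ) < K := by exact_mod_cast Nat.lt_of_lt_of_le Nat.zero_lt_one hK
  set c : ℝ := 1 / K with hc_def
  have hc : 0 < c := by positivity
  set q : α × β → ℝ := fun p => pr μ (fun ω => (X ω, Y ω)) p with hq_def
  have hq0 : ∀ p, 0 ≤ q p := fun p => pr_nonneg hμ.1 _ p
  have hP : ∀ (a : Fin K) (x : α) (y : β),
      pr μ (fun ω => (A ω, X ω, Y ω)) (a, x, y) = c * q (x, y) := by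
    intro a x y; rw [hInd, hUnif]
  have hq1 : ∑ p, q p = 1 := by
    rw [hq_def]; exact (pr_total μ _).trans hμ.2
  clear_value q
  -- marginals
  have hprX : ∀ x, pr μ X x = ∑ y, q (x, y) := by
    intro x
    rw [pr_comp μ (fun ω => (A ω, X ω, Y ω)) (fun t => t.2.1) X (fun ω => rfl) x]
    simp only [Fintype.sum_prod_type, hP, sum_ite_pull]
    simp only [Finset.sum_ite_eq', Finset.mem_univ, if_true, ← Finset.mul_sum,
      Finset.sum_const, Finset.card_univ, Fintype.card_fin, nsmul_eq_mul, hc_def]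
    field_simp
  have hprY : ∀ y, pr μ Y y = ∑ x, q (x, y) := by
    intro y
    rw [pr_comp μ (fun ω => (A ω, X ω, Y ω)) (fun t => t.2.2) Y (fun ω => rfl) y]
    simp only [Fintype.sum_prod_type, hP, Finset.sum_ite_eq', Finset.mem_univ, if_true,
      ← Finset.mul_sum, Finset.sum_const, Finset.card_univ, Fintype.card_fin, nsmul_eq_mul, hc_def]
    field_simp
  have hprXA : ∀ x0 a0, pr μ (fun ω => (X ω, A ω)) (x0, a0) = c * ∑ y, q (x0, y) := by
    intro x0 a0
    rw [pr_comp μ (fun ω => (A ω, X ω, Y ω)) (fun t => (t.2.1, t.1)) _ (fun ω => rfl) _]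
    simp only [Fintype.sum_prod_type, hP, Prod.mk.injEq, ite_and, sum_ite_pull,
      Finset.sum_ite_eq', Finset.mem_univ, if_true, ← Finset.mul_sum]
  have hprZsome : ∀ (y0 : β) (a0 : Fin K),
      pr μ (fun ω => ((if A ω = j then some (Y ω) else none), A ω)) (some y0, a0)
      = if a0 = j then c * ∑ x, q (x, y0) else 0 := by
    intro y0 a0
    rw [pr_comp μ (fun ω => (A ω, X ω, Y ω))
        (fun t => ((if t.1 = j then some t.2.2 else (none : Option β)), t.1)) _ (fun ω => rfl) _]
    simp only [Fintype.sum_prod_type, hP, Prod.mk.injEq]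
    rw [Finset.sum_eq_single a0 (fun b _ hb => by simp [hb]) (by simp)]
    by_cases haj : a0 = j <;>
      simp [haj, Finset.sum_ite_eq', Finset.mul_sum, Finset.sum_comm]
  have hprZnone : ∀ (a0 : Fin K),
      pr μ (fun ω => ((if A ω = j then some (Y ω) else none), A ω)) (none, a0)
      = if a0 = j then 0 else c := by
    intro a0
    rw [pr_comp μ (fun ω => (A ω, X ω, Y ω))
        (fun t => ((if t.1 = j then some t.2.2 else (none : Option β)), t.1)) _ (fun ω => rfl) _]
    simp only [Fintype.sum_prod_type, hP, Prod.mk.injEq]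
    rw [Finset.sum_eq_single a0 (fun b _ hb => by simp [hb]) (by simp)]
    by_cases haj : a0 = j <;>
      simp [haj, ← Finset.mul_sum, ← Fintype.sum_prod_type, hq1]
  have hprXZsome : ∀ (x0 : α) (y0 : β) (a0 : Fin K),
      pr μ (fun ω => (X ω, ((if A ω = j then some (Y ω) else none), A ω))) (x0, (some y0, a0))
      = if a0 = j then c * q (x0, y0) else 0 := by
    intro x0 y0 a0
    rw [pr_comp μ (fun ω => (A ω, X ω, Y ω))
        (fun t => (t.2.1, ((if t.1 = j then some t.2.2 else (none : Option β)), t.1))) _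
        (fun ω => rfl) _]
    simp only [Fintype.sum_prod_type, hP, Prod.mk.injEq]
    rw [Finset.sum_eq_single a0 (fun b _ hb => by simp [hb]) (by simp)]
    by_cases haj : a0 = j <;>
      simp [haj, ite_and, sum_ite_pull, Finset.sum_ite_eq', Finset.mem_univ]
  have hprXZnone : ∀ (x0 : α) (a0 : Fin K),
      pr μ (fun ω => (X ω, ((if A ω = j then some (Y ω) else none), A ω))) (x0, (none, a0))
      = if a0 = j then 0 else c * ∑ y, q (x0, y) := by
    intro x0 a0
    rw [pr_comp μ (fun ω => (A ω, X ω, Y ω))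
        (fun t => (t.2.1, ((if t.1 = j then some t.2.2 else (none : Option β)), t.1))) _
        (fun ω => rfl) _]
    simp only [Fintype.sum_prod_type, hP, Prod.mk.injEq]
    rw [Finset.sum_eq_single a0 (fun b _ hb => by simp [hb]) (by simp)]
    by_cases haj : a0 = j <;>
      simp [haj, ite_and, sum_ite_pull, Finset.sum_ite_eq', Finset.mem_univ, ← Finset.mul_sum]
  have hpx0 : ∀ x, 0 ≤ ∑ y, q (x, y) := fun x => Finset.sum_nonneg fun y _ => hq0 _
  have hpy0 : ∀ y, 0 ≤ ∑ x, q (x, y) := fun y => Finset.sum_nonneg fun x _ => hq0 _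
  have hpx1 : ∑ x, ∑ y, q (x, y) = 1 := by rw [← Fintype.sum_prod_type]; exact hq1
  have hpy1 : ∑ y, ∑ x, q (x, y) = 1 := by rw [Finset.sum_comm]; exact hpx1
  have hq' : ∀ x y, pr μ (fun ω => (X ω, Y ω)) (x, y) = q (x, y) := fun x y => by rw [hq_def]
  set S := ∑ x, ∑ y, q (x, y) * Real.logb 2 (q (x, y)) with hS
  set Sx := ∑ x, (∑ y, q (x, y)) * Real.logb 2 (∑ y, q (x, y)) with hSx
  set Sy := ∑ y, (∑ x, q (x, y)) * Real.logb 2 (∑ x, q (x, y)) with hSy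
  set L := Real.logb 2 c with hL
  clear_value S Sx Sy L
  have hone : ∀ u : ℝ, ∑ a : Fin K,
      (if a = j then u else 0) * Real.logb 2 (if a = j then u else 0) = u * Real.logb 2 u := by
    intro u
    have h : ∀ a : Fin K, (if a = j then u else 0) * Real.logb 2 (if a = j then u else 0)
        = if a = j then u * Real.logb 2 u else 0 := by intro a; split <;> simp
    simp [h, Finset.sum_ite_eq']
  have htwo : ∀ u : ℝ, ∑ a : Fin K,
      (if a = j then 0 else u) * Real.logb 2 (if a = j then 0 else u)
      = ((K:ℝ) - 1) * (u * Real.logb 2 u) := by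
    intro u
    have h : ∀ a : Fin K, (if a = j then (0:ℝ) else u) * Real.logb 2 (if a = j then 0 else u)
        = if a = j then 0 else u * Real.logb 2 u := by intro a; split <;> simp
    rw [Finset.sum_congr rfl fun a _ => h a, sum_fin_ite]; ring
  have hEXY : ent μ (fun ω => (X ω, Y ω)) = -S := by
    simp only [ent, Fintype.sum_prod_type, hq']
    rw [hS]
  have hEX : ent μ X = -Sx := by
    simp only [ent, hprX]
    rw [hSx]
  have hEY : ent μ Y = -Sy := by
    simp only [ent, hprY]
    rw [hSy]
  have hEA : ent μ A = -((K:ℝ) * (c * L)) := by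
    simp [ent, hUnif, hL, Finset.sum_const, Finset.card_univ, mul_assoc]
  have hEXA : ent μ (fun ω => (X ω, A ω)) = -((K:ℝ) * (c * L + c * Sx)) := by
    simp only [ent, Fintype.sum_prod_type, hprXA, Finset.sum_const, Finset.card_univ,
      Fintype.card_fin, nsmul_eq_mul, ← Finset.mul_sum]
    rw [sum_clog c hc _ hpx0, hpx1, hSx, hL]
    ring
  have hEZ : ent μ (fun ω => ((if A ω = j then some (Y ω) else none), A ω))
      = -(((K:ℝ) - 1) * (c * L) + (c * L + c * Sy)) := by
    simp only [ent, Fintype.sum_prod_type, Fintype.sum_option, hprZsome, hprZnone, hone, htwo]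
    rw [sum_clog c hc _ hpy0, hpy1, hSy, hL]
    ring
  have hEXZ : ent μ (fun ω => (X ω, ((if A ω = j then some (Y ω) else none), A ω)))
      = -(((K:ℝ) - 1) * (c * L + c * Sx) + (c * L + c * S)) := by
    simp only [ent, Fintype.sum_prod_type, Fintype.sum_option, hprXZsome, hprXZnone, hone, htwo]
    rw [Finset.sum_add_distrib, ← Finset.mul_sum, sum_clog c hc _ hpx0, hpx1,
      sum_clog2 c hc (fun x y => q (x, y)) (fun x y => hq0 _), hpx1, hS, hSx, hL]
    ring

  -- final assembly
  simp only [condEnt, mi]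
  rw [hEXZ, hEZ, hEX, hEXA, hEA, hEXY, hEY, hc_def]
  have hKne : (K:ℝ) ≠ 0 := ne_of_gt hK0
  field_simp
  ring
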